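/- If P, Q, R satisfy Ramanujan's differential system, then 6R·δ²R − 7(δR)² = −3024·Q·Δ where Δ = (Q³−R²)/1728. -/

import Mathlib

/-- If `P, Q, R` satisfy Ramanujan's system, then `6R·δ²R − 7(δR)² = −3024·Q·Δ`
where `Δ = (Q³−R²)/1728` and `δ = q d/dq`. -/
theorem rankin_R_identity (P Q R : ℂ → ℂ)
    (hP : ContDiff ℂ ⊤ P) (hQ : ContDiff ℂ ⊤ Q) (hR : ContDiff ℂ ⊤ R)
    (h1 : ∀ q : ℂ, q * deriv P q = (P q ^ 2 - Q q) / 12)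
    (h2 : ∀ q : ℂ, q * deriv Q q = (P q * Q q - R q) / 3)
    (h3 : ∀ q : ℂ, q * deriv R q = (P q * R q - Q q ^ 2) / 2) :
    ∀ q : ℂ,
      6 * R q * (q * deriv (fun t => t * deriv R t) q) - 7 * (q * deriv R q) ^ 2 =
        -3024 * Q q * ((Q q ^ 3 - R q ^ 2) / 1728) := by
  intro q
  have hfun : (fun t => t * deriv R t) = fun t => (P t * R t - Q t ^ 2) / 2 :=
    funext fun t => h3 t
  have dP : HasDerivAt P (deriv P q) q := (hP.differentiable (by simp) q).hasDerivAt
  have dQ : HasDerivAt Q (deriv Q q) q := (hQ.differentiable (by simp) q).hasDerivAt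
  have dR : HasDerivAt R (deriv R q) q := (hR.differentiable (by simp) q).hasDerivAt
  have hD : HasDerivAt (fun t => (P t * R t - Q t ^ 2) / 2)
      ((deriv P q * R q + P q * deriv R q - 2 * Q q * deriv Q q) / 2) q := by
    have := ((dP.mul dR).sub (dQ.pow 2)).div_const 2
    simp only [Pi.mul_apply, Pi.sub_apply, Pi.pow_apply] at this
    refine this.congr_deriv ?_
    push_cast
    ring
  have key : deriv (fun t => t * deriv R t) q =
      (deriv P q * R q + P q * deriv R q - 2 * Q q * deriv Q q) / 2 := by
    rw [hfun]; exact hD.deriv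
  rw [key]
  linear_combination (3 * R q ^ 2) * h1 q + (-6 * R q * Q q) * h2 q +
    (3 * R q * P q - 7 * (q * deriv R q + (P q * R q - Q q ^ 2) / 2)) * h3 q
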